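/- For every natural number n, ∑_{k=0}^{2n} (-1/2)^k · C(2n+k,k) · C(2n,k) · (1 + 2k(H_{2n+k} − H_k)) = (-1)^n · 2^{2n} · (n!)^2 / (2n)!, as an identity of rational numbers. (This is the evaluation S_{1/2}(m) at even m = 2n, where S_λ(m) = ∑_{k=0}^{m} (-λ)^k C(m+k,k) C(m,k) (1 + 2k(H_{m+k} − H_k)).) -/

import Mathlib

open Finset

lemma choose_row_succ (m k : ℕ) :
    ((Nat.choose (m+1) k : ℚ)) * ((m:ℚ)+1-k) = (Nat.choose m k) * ((m:ℚ)+1) := by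
  rcases le_or_gt k (m+1) with h | h
  · have h0 := Nat.choose_mul_succ_eq m k
    have h1 : ((Nat.choose m k * (m+1) : ℕ) : ℚ) = ((Nat.choose (m+1) k * (m+1-k) : ℕ) : ℚ) := by
      exact_mod_cast h0
    push_cast [Nat.cast_sub h] at h1
    linear_combination -h1
  · have h1 : Nat.choose (m+1) k = 0 := Nat.choose_eq_zero_of_lt h
    have h2 : Nat.choose m k = 0 := Nat.choose_eq_zero_of_lt (by omega)
    simp [h1, h2]

lemma choose_col_succ (m k : ℕ) :
    ((k:ℚ)+1) * (Nat.choose (m+1) (k+1)) = ((m:ℚ)+1) * (Nat.choose m k) := by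
  have h0 := Nat.add_one_mul_choose_eq m k
  have h1 : ((Nat.succ m * Nat.choose m k : ℕ) : ℚ) = ((Nat.choose (m+1) (k+1) * Nat.succ k : ℕ) : ℚ) := by
    exact_mod_cast h0
  push_cast at h1
  linear_combination -h1

lemma choose_right_succ (m k : ℕ) :
    ((k:ℚ)+1) * (Nat.choose m (k+1)) = ((m:ℚ)-k) * (Nat.choose m k) := by
  rcases le_or_gt k m with h | h
  · have h0 := Nat.choose_succ_right_eq m k
    have h1 : ((Nat.choose m (k+1) * (k+1) : ℕ) : ℚ) = ((Nat.choose m k * (m-k) : ℕ) : ℚ) := by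
      exact_mod_cast h0
    push_cast [Nat.cast_sub h] at h1
    linear_combination h1
  · have h1 : Nat.choose m (k+1) = 0 := Nat.choose_eq_zero_of_lt (by omega)
    have h2 : Nat.choose m k = 0 := Nat.choose_eq_zero_of_lt h
    simp [h1, h2]

/-- Harmonic numbers `H_n = ∑_{j=1}^n 1/j`. -/
def H (n : ℕ) : ℚ := ∑ j ∈ Icc 1 n, (1 : ℚ) / j

lemma Hsucc (m : ℕ) : H (m+1) = H m + 1/((m:ℚ)+1) := by
  unfold H
  rw [Finset.sum_Icc_succ_top (by omega)]
  push_cast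
  ring

def T (n k : ℕ) : ℚ :=
  (-(1 / 2) : ℚ) ^ k * (Nat.choose (2 * n + k) k) * (Nat.choose (2 * n) k) *
    (1 + 2 * k * (H (2 * n + k) - H k))

noncomputable def pA (n k : ℚ) : ℚ :=
  (256*n^4+1280*n^3+2288*n^2+1720*n+456)*k - (384*n^4+1792*n^3+2856*n^2+1756*n+328)*k^2
    - (128*n^3+480*n^2+552*n+142)*k^3 - (160*n^2+432*n+310)*k^4

noncomputable def pB (n k : ℚ) : ℚ :=
  (256*n^4+1280*n^3+2288*n^2+1720*n+456)*k^2 - (256*n^4+1280*n^3+2224*n^2+1560*n+372)*k^3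
    + 24*k^4 - (64*n^2+160*n+108)*k^5

noncomputable def G (n k : ℕ) : ℚ :=
  (-(1 / 2) : ℚ) ^ k * (Nat.choose (2 * n + k) k) * (Nat.choose (2 * n + 4) k) *
    (pA n k + pB n k * (H (2 * n + k) - H k)) /
      ((2*(n:ℚ)+1)*(2*(n:ℚ)+2)*(2*(n:ℚ)+3)*(2*(n:ℚ)+4))

set_option maxHeartbeats 4000000 in
lemma main_alg (q y x u a K N : ℚ) (dk : K + 1 ≠ 0)
    (d1 : 2 * N + 1 ≠ 0) (d2 : 2 * N + 2 ≠ 0) (d3 : 2 * N + 3 ≠ 0) (d4 : 2 * N + 4 ≠ 0)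
    (dm1 : 2 * N + K + 1 ≠ 0) (dm2 : 2 * N + K + 2 ≠ 0) (dm3 : 2 * N + K + 3 ≠ 0)
    (dm4 : 2 * N + K + 4 ≠ 0) :
    (2 * N + 3) ^ 2 *
          (q *
                (a * (2 * N + K + 1) * (2 * N + K + 2) * (2 * N + K + 3) * (2 * N + K + 4) /
                  ((2 * N + 1) * (2 * N + 2) * (2 * N + 3) * (2 * N + 4))) *
              u *
            (1 +
              2 * K *
                (x + 1 / (2 * N + K + 1) + 1 / (2 * N + K + 2) + 1 / (2 * N + K + 3) + 1 / (2 * N + K + 4) - y))) +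
        (8 * N ^ 2 + 20 * N + 14) *
          (q *
              (a * u * ((2 * N + K + 1) * (2 * N + K + 2) * (2 * N + 3 - K) * (2 * N + 4 - K)) /
                ((2 * N + 1) * (2 * N + 2) * (2 * N + 3) * (2 * N + 4))) *
            (1 + 2 * K * (x + 1 / (2 * N + K + 1) + 1 / (2 * N + K + 2) - y))) +
      4 * (N + 1) ^ 2 *
        (q * a *
            (u * (2 * N + 1 - K) * (2 * N + 2 - K) * (2 * N + 3 - K) * (2 * N + 4 - K) /
              ((2 * N + 1) * (2 * N + 2) * (2 * N + 3) * (2 * N + 4))) *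
          (1 + 2 * K * (x - y))) =
    q * -(1 / 2) * (a * u * ((2 * N + K + 1) * (2 * N + 4 - K)) / ((K + 1) * (K + 1))) *
          ((256 * N ^ 4 + 1280 * N ^ 3 + 2288 * N ^ 2 + 1720 * N + 456) * (K + 1) -
                  (384 * N ^ 4 + 1792 * N ^ 3 + 2856 * N ^ 2 + 1756 * N + 328) * (K + 1) ^ 2 -
                (128 * N ^ 3 + 480 * N ^ 2 + 552 * N + 142) * (K + 1) ^ 3 -
              (160 * N ^ 2 + 432 * N + 310) * (K + 1) ^ 4 +
            ((256 * N ^ 4 + 1280 * N ^ 3 + 2288 * N ^ 2 + 1720 * N + 456) * (K + 1) ^ 2 -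
                    (256 * N ^ 4 + 1280 * N ^ 3 + 2224 * N ^ 2 + 1560 * N + 372) * (K + 1) ^ 3 +
                  24 * (K + 1) ^ 4 -
                (64 * N ^ 2 + 160 * N + 108) * (K + 1) ^ 5) *
              (x + 1 / (2 * N + K + 1) - (y + 1 / (K + 1)))) /
        ((2 * N + 1) * (2 * N + 2) * (2 * N + 3) * (2 * N + 4)) -
      q * a * u *
          ((256 * N ^ 4 + 1280 * N ^ 3 + 2288 * N ^ 2 + 1720 * N + 456) * K -
                  (384 * N ^ 4 + 1792 * N ^ 3 + 2856 * N ^ 2 + 1756 * N + 328) * K ^ 2 -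
                (128 * N ^ 3 + 480 * N ^ 2 + 552 * N + 142) * K ^ 3 -
              (160 * N ^ 2 + 432 * N + 310) * K ^ 4 +
            ((256 * N ^ 4 + 1280 * N ^ 3 + 2288 * N ^ 2 + 1720 * N + 456) * K ^ 2 -
                    (256 * N ^ 4 + 1280 * N ^ 3 + 2224 * N ^ 2 + 1560 * N + 372) * K ^ 3 +
                  24 * K ^ 4 -
                (64 * N ^ 2 + 160 * N + 108) * K ^ 5) *
              (x - y)) /
        ((2 * N + 1) * (2 * N + 2) * (2 * N + 3) * (2 * N + 4)) := by
  have hDD : (2 * N + 1) * (2 * N + 2) * (2 * N + 3) * (2 * N + 4) ≠ 0 :=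
    mul_ne_zero (mul_ne_zero (mul_ne_zero d1 d2) d3) d4
  have h2K3 : (2:ℚ) * (K + 1) ^ 3 ≠ 0 := mul_ne_zero two_ne_zero (pow_ne_zero 3 dk)
  have hL1 :
      (2 * N + 3) ^ 2 *
          (q *
                (a * (2 * N + K + 1) * (2 * N + K + 2) * (2 * N + K + 3) * (2 * N + K + 4) /
                  ((2 * N + 1) * (2 * N + 2) * (2 * N + 3) * (2 * N + 4))) *
              u *
            (1 +
              2 * K *
                (x + 1 / (2 * N + K + 1) + 1 / (2 * N + K + 2) + 1 / (2 * N + K + 3) + 1 / (2 * N + K + 4) - y)))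
      = (2 * N + 3) ^ 2 * (q * a * u) *
          ((1 + 2 * K * (x - y)) * ((2 * N + K + 1) * (2 * N + K + 2) * (2 * N + K + 3) * (2 * N + K + 4))
            + 2 * K * ((2 * N + K + 2) * ((2 * N + K + 3) * (2 * N + K + 4))
              + (2 * N + K + 1) * ((2 * N + K + 3) * (2 * N + K + 4))
              + (2 * N + K + 1) * ((2 * N + K + 2) * (2 * N + K + 4))
              + (2 * N + K + 1) * ((2 * N + K + 2) * (2 * N + K + 3))))
          / ((2 * N + 1) * (2 * N + 2) * (2 * N + 3) * (2 * N + 4)) := by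
    field_simp
    ring1
  have hL2 :
      (8 * N ^ 2 + 20 * N + 14) *
          (q *
              (a * u * ((2 * N + K + 1) * (2 * N + K + 2) * (2 * N + 3 - K) * (2 * N + 4 - K)) /
                ((2 * N + 1) * (2 * N + 2) * (2 * N + 3) * (2 * N + 4))) *
            (1 + 2 * K * (x + 1 / (2 * N + K + 1) + 1 / (2 * N + K + 2) - y)))
      = (8 * N ^ 2 + 20 * N + 14) * (q * a * u) *
          (((1 + 2 * K * (x - y)) * ((2 * N + K + 1) * (2 * N + K + 2))
              + 2 * K * ((2 * N + K + 2) + (2 * N + K + 1)))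
            * ((2 * N + 3 - K) * (2 * N + 4 - K)))
          / ((2 * N + 1) * (2 * N + 2) * (2 * N + 3) * (2 * N + 4)) := by
    field_simp
    have e1 : N * 2 + K + 1 ≠ 0 := fun h => dm1 (by linarith)
    have e2 : N * 2 + K + 2 ≠ 0 := fun h => dm2 (by linarith)
    field_simp
    ring1
  have hL3 :
      4 * (N + 1) ^ 2 *
        (q * a *
            (u * (2 * N + 1 - K) * (2 * N + 2 - K) * (2 * N + 3 - K) * (2 * N + 4 - K) /
              ((2 * N + 1) * (2 * N + 2) * (2 * N + 3) * (2 * N + 4))) *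
          (1 + 2 * K * (x - y)))
      = 4 * (N + 1) ^ 2 * (q * a * u) *
          ((1 + 2 * K * (x - y)) * ((2 * N + 1 - K) * (2 * N + 2 - K) * (2 * N + 3 - K) * (2 * N + 4 - K)))
          / ((2 * N + 1) * (2 * N + 2) * (2 * N + 3) * (2 * N + 4)) := by
    ring
  have hR1 :
      q * -(1 / 2) * (a * u * ((2 * N + K + 1) * (2 * N + 4 - K)) / ((K + 1) * (K + 1))) *
          (((256 * N ^ 4 + 1280 * N ^ 3 + 2288 * N ^ 2 + 1720 * N + 456) * (K + 1) -
                  (384 * N ^ 4 + 1792 * N ^ 3 + 2856 * N ^ 2 + 1756 * N + 328) * (K + 1) ^ 2 -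
                (128 * N ^ 3 + 480 * N ^ 2 + 552 * N + 142) * (K + 1) ^ 3 -
              (160 * N ^ 2 + 432 * N + 310) * (K + 1) ^ 4) +
            ((256 * N ^ 4 + 1280 * N ^ 3 + 2288 * N ^ 2 + 1720 * N + 456) * (K + 1) ^ 2 -
                    (256 * N ^ 4 + 1280 * N ^ 3 + 2224 * N ^ 2 + 1560 * N + 372) * (K + 1) ^ 3 +
                  24 * (K + 1) ^ 4 -
                (64 * N ^ 2 + 160 * N + 108) * (K + 1) ^ 5) *
              (x + 1 / (2 * N + K + 1) - (y + 1 / (K + 1)))) /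
        ((2 * N + 1) * (2 * N + 2) * (2 * N + 3) * (2 * N + 4))
      = -(q * a * u) * (2 * N + 4 - K) *
          (((256 * N ^ 4 + 1280 * N ^ 3 + 2288 * N ^ 2 + 1720 * N + 456) * (K + 1) -
                  (384 * N ^ 4 + 1792 * N ^ 3 + 2856 * N ^ 2 + 1756 * N + 328) * (K + 1) ^ 2 -
                (128 * N ^ 3 + 480 * N ^ 2 + 552 * N + 142) * (K + 1) ^ 3 -
              (160 * N ^ 2 + 432 * N + 310) * (K + 1) ^ 4) * ((2 * N + K + 1) * (K + 1))
            + ((256 * N ^ 4 + 1280 * N ^ 3 + 2288 * N ^ 2 + 1720 * N + 456) * (K + 1) ^ 2 -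
                    (256 * N ^ 4 + 1280 * N ^ 3 + 2224 * N ^ 2 + 1560 * N + 372) * (K + 1) ^ 3 +
                  24 * (K + 1) ^ 4 -
                (64 * N ^ 2 + 160 * N + 108) * (K + 1) ^ 5) *
                ((x - y) * ((2 * N + K + 1) * (K + 1)) + (K + 1) - (2 * N + K + 1)))
          / (2 * (K + 1) ^ 3 * ((2 * N + 1) * (2 * N + 2) * (2 * N + 3) * (2 * N + 4))) := by
    field_simp
    ring1
  rw [hL1, hL2, hL3, hR1, ← add_div, ← add_div]
  rw [div_sub_div _ _ (mul_ne_zero h2K3 hDD) hDD, div_eq_div_iff hDD (mul_ne_zero (mul_ne_zero h2K3 hDD) hDD)]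
  ring1


set_option maxHeartbeats 4000000 in
set_option maxRecDepth 100000 in
lemma key (n k : ℕ) :
    (2*(n:ℚ)+3)^2 * T (n+2) k + (8*(n:ℚ)^2+20*n+14) * T (n+1) k + 4*((n:ℚ)+1)^2 * T n k
      = G n (k+1) - G n k := by
  have d1 : (2*(n:ℚ)+1) ≠ 0 := by positivity
  have d2 : (2*(n:ℚ)+2) ≠ 0 := by positivity
  have d3 : (2*(n:ℚ)+3) ≠ 0 := by positivity
  have d4 : (2*(n:ℚ)+4) ≠ 0 := by positivity
  have dk : ((k:ℚ)+1) ≠ 0 := by positivity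
  have dm1 : (2*(n:ℚ)+(k:ℚ)+1) ≠ 0 := by positivity
  have dm2 : (2*(n:ℚ)+(k:ℚ)+2) ≠ 0 := by positivity
  have dm3 : (2*(n:ℚ)+(k:ℚ)+3) ≠ 0 := by positivity
  have dm4 : (2*(n:ℚ)+(k:ℚ)+4) ≠ 0 := by positivity
  -- row ladder at column k, rows 2n+k .. 2n+k+4
  have f1 := choose_row_succ (2*n+k) k
  have f2 := choose_row_succ (2*n+k+1) k
  have f3 := choose_row_succ (2*n+k+2) k
  have f4 := choose_row_succ (2*n+k+3) k
  rw [show 2*n+k+1+1 = 2*n+k+2 from by omega] at f2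
  rw [show 2*n+k+2+1 = 2*n+k+3 from by omega] at f3
  rw [show 2*n+k+3+1 = 2*n+k+4 from by omega] at f4
  push_cast at f1 f2 f3 f4
  -- row ladder rows 2n .. 2n+4
  have g1 := choose_row_succ (2*n) k
  have g2 := choose_row_succ (2*n+1) k
  have g3 := choose_row_succ (2*n+2) k
  have g4 := choose_row_succ (2*n+3) k
  rw [show 2*n+1+1 = 2*n+2 from by omega] at g2
  rw [show 2*n+2+1 = 2*n+3 from by omega] at g3
  rw [show 2*n+3+1 = 2*n+4 from by omega] at g4
  push_cast at g1 g2 g3 g4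
  have v1 := choose_col_succ (2*n+k) k
  have w1 := choose_right_succ (2*n+4) k
  push_cast at v1 w1
  -- solved forms (combined products to keep one common denominator per term)
  have e4 : ((Nat.choose (2*n+k+4) k : ℚ)) =
      (Nat.choose (2*n+k) k) * (2*(n:ℚ)+k+1)*(2*(n:ℚ)+k+2)*(2*(n:ℚ)+k+3)*(2*(n:ℚ)+k+4)
        /((2*(n:ℚ)+1)*(2*(n:ℚ)+2)*(2*(n:ℚ)+3)*(2*(n:ℚ)+4)) := by
    field_simp
    linear_combination ((2*(n:ℚ)+(k:ℚ)+2)*(2*(n:ℚ)+(k:ℚ)+3)*(2*(n:ℚ)+(k:ℚ)+4))*f1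
      + ((2*(n:ℚ)+1)*(2*(n:ℚ)+(k:ℚ)+3)*(2*(n:ℚ)+(k:ℚ)+4))*f2
      + ((2*(n:ℚ)+1)*(2*(n:ℚ)+2)*(2*(n:ℚ)+(k:ℚ)+4))*f3
      + ((2*(n:ℚ)+1)*(2*(n:ℚ)+2)*(2*(n:ℚ)+3))*f4
  have eg0 : ((Nat.choose (2*n) k : ℚ)) =
      (Nat.choose (2*n+4) k) * (2*(n:ℚ)+1-(k:ℚ))*(2*(n:ℚ)+2-(k:ℚ))*(2*(n:ℚ)+3-(k:ℚ))*(2*(n:ℚ)+4-(k:ℚ))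
        /((2*(n:ℚ)+1)*(2*(n:ℚ)+2)*(2*(n:ℚ)+3)*(2*(n:ℚ)+4)) := by
    field_simp
    linear_combination -(((2*(n:ℚ)+2)*(2*(n:ℚ)+3)*(2*(n:ℚ)+4))*g1
      + ((2*(n:ℚ)+1-(k:ℚ))*(2*(n:ℚ)+3)*(2*(n:ℚ)+4))*g2
      + ((2*(n:ℚ)+1-(k:ℚ))*(2*(n:ℚ)+2-(k:ℚ))*(2*(n:ℚ)+4))*g3
      + ((2*(n:ℚ)+1-(k:ℚ))*(2*(n:ℚ)+2-(k:ℚ))*(2*(n:ℚ)+3-(k:ℚ)))*g4)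
  have eT1 : ((Nat.choose (2*n+k+2) k : ℚ)) * ((Nat.choose (2*n+2) k : ℚ)) =
      (Nat.choose (2*n+k) k) * (Nat.choose (2*n+4) k) *
        ((2*(n:ℚ)+k+1)*(2*(n:ℚ)+k+2)*(2*(n:ℚ)+3-(k:ℚ))*(2*(n:ℚ)+4-(k:ℚ)))
        /((2*(n:ℚ)+1)*(2*(n:ℚ)+2)*(2*(n:ℚ)+3)*(2*(n:ℚ)+4)) := by
    have e2 : ((Nat.choose (2*n+k+2) k : ℚ)) =
        (Nat.choose (2*n+k) k) * (2*(n:ℚ)+k+1)*(2*(n:ℚ)+k+2)/((2*(n:ℚ)+1)*(2*(n:ℚ)+2)) := by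
      field_simp
      linear_combination (2*(n:ℚ)+(k:ℚ)+2)*f1 + (2*(n:ℚ)+1)*f2
    have eg2 : ((Nat.choose (2*n+2) k : ℚ)) =
        (Nat.choose (2*n+4) k) * (2*(n:ℚ)+3-(k:ℚ))*(2*(n:ℚ)+4-(k:ℚ))/((2*(n:ℚ)+3)*(2*(n:ℚ)+4)) := by
      field_simp
      linear_combination -((2*(n:ℚ)+4)*g3 + (2*(n:ℚ)+3-(k:ℚ))*g4)
    rw [e2, eg2]
    field_simp
  have eGk : ((Nat.choose (2*n+k+1) (k+1) : ℚ)) * ((Nat.choose (2*n+4) (k+1) : ℚ)) =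
      (Nat.choose (2*n+k) k) * (Nat.choose (2*n+4) k) *
        ((2*(n:ℚ)+k+1)*(2*(n:ℚ)+4-(k:ℚ)))/(((k:ℚ)+1)*((k:ℚ)+1)) := by
    have ev : ((Nat.choose (2*n+k+1) (k+1) : ℚ)) =
        (Nat.choose (2*n+k) k) * (2*(n:ℚ)+k+1)/((k:ℚ)+1) := by
      field_simp
      linear_combination v1
    have ew : ((Nat.choose (2*n+4) (k+1) : ℚ)) =
        (Nat.choose (2*n+4) k) * (2*(n:ℚ)+4-(k:ℚ))/((k:ℚ)+1) := by
      field_simp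
      linear_combination w1
    rw [ev, ew]
    field_simp
  -- harmonic shifts
  have hH1 : H (2*n+k+1) = H (2*n+k) + 1/(2*(n:ℚ)+k+1) := by
    have := Hsucc (2*n+k); push_cast at this; convert this using 3 <;> push_cast <;> ring
  have hH2 : H (2*n+k+2) = H (2*n+k) + 1/(2*(n:ℚ)+k+1) + 1/(2*(n:ℚ)+k+2) := by
    have h := Hsucc (2*n+k+1)
    rw [show 2*n+k+1+1 = 2*n+k+2 from by omega] at h
    push_cast at h
    rw [h, hH1]; ring
  have hH3 : H (2*n+k+3) = H (2*n+k+2) + 1/(2*(n:ℚ)+k+3) := by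
    have h := Hsucc (2*n+k+2)
    rw [show 2*n+k+2+1 = 2*n+k+3 from by omega] at h
    push_cast at h; rw [h]; ring
  have hH4 : H (2*n+k+4) = H (2*n+k) + 1/(2*(n:ℚ)+k+1) + 1/(2*(n:ℚ)+k+2)
      + 1/(2*(n:ℚ)+k+3) + 1/(2*(n:ℚ)+k+4) := by
    have h := Hsucc (2*n+k+3)
    rw [show 2*n+k+3+1 = 2*n+k+4 from by omega] at h
    push_cast at h; rw [h, hH3, hH2]; ring
  have hHk : H (k+1) = H k + 1/((k:ℚ)+1) := by
    have := Hsucc k; push_cast at this; exact this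
  -- unfold and normalize arguments
  simp only [T, G]
  rw [show 2*(n+2) = 2*n+4 from by ring, show 2*(n+1) = 2*n+2 from by ring]
  rw [show 2*n+4+k = 2*n+k+4 from by omega, show 2*n+2+k = 2*n+k+2 from by omega,
      show 2*n+(k+1) = 2*n+k+1 from by omega]
  rw [show ((-(1/2) : ℚ))^(k+1) = ((-(1/2) : ℚ))^k * (-(1/2)) from pow_succ _ _]
  rw [hH1, hH2, hH4, hHk]
  rw [mul_assoc ((-(1/2):ℚ)^k * (-(1/2))) _ _, eGk]
  rw [mul_assoc ((-(1/2):ℚ)^k) ((Nat.choose (2*n+k+2) k : ℚ)) _, eT1]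
  rw [e4, eg0]
  simp only [pA, pB]
  push_cast
  set N : ℚ := (n:ℚ) with hN
  set K : ℚ := (k:ℚ) with hK
  set a : ℚ := ((Nat.choose (2*n+k) k : ℕ) : ℚ) with ha
  set u : ℚ := ((Nat.choose (2*n+4) k : ℕ) : ℚ) with hu
  set x : ℚ := H (2*n+k) with hx
  set y : ℚ := H k with hy
  set q : ℚ := (-(1/2) : ℚ)^k with hq
  clear_value N K a u x y q
  exact main_alg q y x u a K N dk d1 d2 d3 d4 dm1 dm2 dm3 dm4

noncomputable def S (n : ℕ) : ℚ := ∑ k ∈ range (2*n+1), T n k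

lemma Tzero (m k : ℕ) (h : 2*m < k) : T m k = 0 := by
  simp [T, Nat.choose_eq_zero_of_lt h]

lemma sum_ext (m N : ℕ) (hm : 2*m+1 ≤ N) : ∑ k ∈ range N, T m k = S m := by
  rw [S]
  refine (Finset.sum_subset (Finset.range_subset_range.2 hm) ?_).symm
  intro x hx2 hx
  refine Tzero m x ?_
  simp only [Finset.mem_range] at hx
  omega

lemma Gzero_top (n : ℕ) : G n (2*n+6) = 0 := by
  have : Nat.choose (2*n+4) (2*n+6) = 0 := Nat.choose_eq_zero_of_lt (by omega)
  simp [G, this]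

lemma Gzero_bot (n : ℕ) : G n 0 = 0 := by
  simp [G, pA, pB]

lemma recur (n : ℕ) :
    (2*(n:ℚ)+3)^2 * S (n+2) + (8*(n:ℚ)^2+20*n+14) * S (n+1) + 4*((n:ℚ)+1)^2 * S n = 0 := by
  have h1 : ∑ k ∈ range (2*n+6),
      ((2*(n:ℚ)+3)^2 * T (n+2) k + (8*(n:ℚ)^2+20*n+14) * T (n+1) k + 4*((n:ℚ)+1)^2 * T n k)
      = G n (2*n+6) - G n 0 := by
    rw [Finset.sum_congr rfl (fun k _ => key n k)]
    exact Finset.sum_range_sub (G n) (2*n+6)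
  rw [Gzero_top, Gzero_bot, sub_zero] at h1
  have h2 : ∑ k ∈ range (2*n+6),
      ((2*(n:ℚ)+3)^2 * T (n+2) k + (8*(n:ℚ)^2+20*n+14) * T (n+1) k + 4*((n:ℚ)+1)^2 * T n k)
      = (2*(n:ℚ)+3)^2 * S (n+2) + (8*(n:ℚ)^2+20*n+14) * S (n+1) + 4*((n:ℚ)+1)^2 * S n := by
    rw [Finset.sum_add_distrib, Finset.sum_add_distrib, ← Finset.mul_sum, ← Finset.mul_sum,
        ← Finset.mul_sum, sum_ext (n+2) (2*n+6) (by omega), sum_ext (n+1) (2*n+6) (by omega),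
        sum_ext n (2*n+6) (by omega)]
  rw [h2] at h1
  exact h1

noncomputable def R (n : ℕ) : ℚ :=
  (-1 : ℚ) ^ n * 2 ^ (2 * n) * (Nat.factorial n : ℚ) ^ 2 / (Nat.factorial (2 * n) : ℚ)

lemma Rrec (n : ℕ) :
    (2*(n:ℚ)+3)^2 * R (n+2) + (8*(n:ℚ)^2+20*n+14) * R (n+1) + 4*((n:ℚ)+1)^2 * R n = 0 := by
  have f1 : Nat.factorial (2*(n+1)) = (2*n+2)*((2*n+1)*Nat.factorial (2*n)) := by
    rw [show 2*(n+1) = (2*n+1)+1 from by ring, Nat.factorial_succ, Nat.factorial_succ]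
  have f2 : Nat.factorial (2*(n+2)) = (2*n+4)*((2*n+3)*Nat.factorial (2*(n+1))) := by
    rw [show 2*(n+2) = (2*(n+1)+1)+1 from by ring, Nat.factorial_succ, Nat.factorial_succ,
        show 2*(n+1)+1+1 = 2*n+4 from by ring, show 2*(n+1)+1 = 2*n+3 from by ring]
  have g1 : Nat.factorial (n+1) = (n+1)*Nat.factorial n := Nat.factorial_succ n
  have g2 : Nat.factorial (n+2) = (n+2)*Nat.factorial (n+1) := Nat.factorial_succ (n+1)
  have hfz : ((Nat.factorial (2*n) : ℚ)) ≠ 0 := by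
    exact_mod_cast Nat.factorial_ne_zero (2*n)
  simp only [R, f2, f1, g1, g2]
  rw [pow_succ, pow_succ, show 2*(n+2) = 2*n+4 from by ring, show 2*(n+1) = 2*n+2 from by ring,
      pow_add, pow_add]
  push_cast
  field_simp
  ring

lemma base0 : S 0 = R 0 := by
  simp [S, T, R, H]

lemma base1 : S 1 = R 1 := by
  have h1 : H 1 = 1 := by simp [H]
  have h2 : H 2 = 1 + 1/2 := by have := Hsucc 1; rw [this, h1]; norm_num
  have h3 : H 3 = 1 + 1/2 + 1/3 := by have := Hsucc 2; rw [this, h2]; norm_num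
  have h4 : H 4 = 1 + 1/2 + 1/3 + 1/4 := by have := Hsucc 3; rw [this, h3]; norm_num
  rw [S]
  rw [show 2*1+1 = 3 from rfl]
  rw [Finset.sum_range_succ, Finset.sum_range_succ, Finset.sum_range_succ, Finset.range_zero,
      Finset.sum_empty]
  simp only [T, R]
  norm_num [h1, h2, h3, h4, show Nat.choose 3 1 = 3 from rfl, show Nat.choose 4 2 = 6 from rfl,
      Nat.factorial]

lemma main (n : ℕ) : S n = R n := by
  suffices h : ∀ m, S m = R m ∧ S (m+1) = R (m+1) from (h n).1
  intro m
  induction m with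
  | zero => exact ⟨base0, base1⟩
  | succ p ih =>
    refine ⟨ih.2, ?_⟩
    have hr := recur p
    have hR := Rrec p
    rw [ih.1, ih.2] at hr
    have hc : ((2*(p:ℚ)+3)^2) ≠ 0 := by positivity
    have : (2*(p:ℚ)+3)^2 * S (p+2) = (2*(p:ℚ)+3)^2 * R (p+2) := by linarith
    exact mul_left_cancel₀ hc this

theorem stmt_13 (n : ℕ) :
    ∑ k ∈ range (2 * n + 1), (-(1 / 2) : ℚ) ^ k * (Nat.choose (2 * n + k) k) *
        (Nat.choose (2 * n) k) * (1 + 2 * k * (H (2 * n + k) - H k)) =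
      (-1 : ℚ) ^ n * 2 ^ (2 * n) * (Nat.factorial n : ℚ) ^ 2 / (Nat.factorial (2 * n) : ℚ) := by
  exact main n
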